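/- For the two-layer minimalist model and any parameter θ = (u, v₁) with σ₁²v₁² + σ₁²o₁² > 0, the sharpness satisfies (1/N)·[σ₁²v₁² + σ₁²o₁² + 2σ₁⁴o₁²v₁²/(σ₁²v₁² + σ₁²o₁²) − 2σ₁³d₁o₁v₁/(σ₁²v₁² + σ₁²o₁²)] ≤ S(θ) ≤ (1/N)·[σ₁²v₁² + Σ_{i=1}^r σ_i²o_i² + √(Σ_{i=1}^r (σ_i(σ_i o_i v₁ − d_i))²)]. -/

import Mathlib

open scoped BigOperators
set_option maxHeartbeats 2000000

open ContinuousLinearMap in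
lemma hessianQuad {E : Type*} [NormedAddCommGroup E] [NormedSpace ℝ E]
    {NN : ℕ} (A : Fin NN → (E →L[ℝ] ℝ)) (V : E →L[ℝ] ℝ)
    (y : Fin NN → ℝ) (c : ℝ) (θ ξ : E) :
    fderiv ℝ (fderiv ℝ (fun φ => c * ∑ n, (A n φ * V φ - y n)^2)) θ ξ ξ
      = c * ∑ n, (2 * (A n θ * V ξ + V θ * A n ξ)^2
          + 4 * (A n θ * V θ - y n) * (A n ξ * V ξ)) := by
  have h1 : ∀ (n : Fin NN) (φ : E), HasFDerivAt (fun φ => A n φ * V φ - y n)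
      (A n φ • V + V φ • A n) φ := fun n φ =>
    ((A n).hasFDerivAt.mul V.hasFDerivAt).sub_const (y n)
  have h2 : ∀ (n : Fin NN) (φ : E), HasFDerivAt (fun φ => (A n φ * V φ - y n)^2)
      ((2 * (A n φ * V φ - y n)) • (A n φ • V + V φ • A n)) φ := by
    intro n φ
    have h := (h1 n φ).mul (h1 n φ)
    simp only [pow_two]
    rw [mul_smul, two_smul]
    exact h
  have hasD : ∀ φ : E, HasFDerivAt (fun φ => c * ∑ n, (A n φ * V φ - y n)^2)
      (c • ∑ n, (2 * (A n φ * V φ - y n)) • (A n φ • V + V φ • A n)) φ := by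
    intro φ
    exact (HasFDerivAt.fun_sum (fun n _ => h2 n φ)).const_mul c
  have hfd : fderiv ℝ (fun φ => c * ∑ n, (A n φ * V φ - y n)^2)
      = fun φ => c • ∑ n, (2 * (A n φ * V φ - y n)) • (A n φ • V + V φ • A n) :=
    funext fun φ => (hasD φ).fderiv
  rw [hfd]
  set Φ : Fin NN → (E →L[ℝ] E →L[ℝ] ℝ) := fun n => (A n).smulRight V + V.smulRight (A n) with hΦ
  have hM : ∀ n, HasFDerivAt (fun φ : E => A n φ • V + V φ • A n) (Φ n) θ := by
    intro n
    have : (fun φ : E => A n φ • V + V φ • A n) = ⇑(Φ n) := by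
      funext φ; ext ζ; simp [hΦ, mul_comm]
    rw [this]; exact (Φ n).hasFDerivAt
  have hsm : ∀ n, HasFDerivAt (fun φ : E => (2 * (A n φ * V φ - y n)) • (A n φ • V + V φ • A n))
      ((2 * (A n θ * V θ - y n)) • Φ n
        + ((2:ℝ) • (A n θ • V + V θ • A n)).smulRight (A n θ • V + V θ • A n)) θ := by
    intro n
    exact ((h1 n θ).const_mul 2).smul (hM n)
  have hasH : HasFDerivAt (fun φ : E => c • ∑ n, (2 * (A n φ * V φ - y n)) • (A n φ • V + V φ • A n))
      (c • ∑ n, ((2 * (A n θ * V θ - y n)) • Φ n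
        + ((2:ℝ) • (A n θ • V + V θ • A n)).smulRight (A n θ • V + V θ • A n))) θ :=
    (HasFDerivAt.fun_sum (fun n _ => hsm n)).fun_const_smul c
  rw [hasH.fderiv]
  simp only [coe_smul', Pi.smul_apply, coe_sum', Finset.sum_apply, add_apply, smul_apply,
    smulRight_apply, smul_eq_mul, hΦ, Finset.mul_sum]
  refine Finset.sum_congr rfl fun n _ => ?_
  ring

lemma ortho_expand {k n : ℕ} (E : Fin k → Fin n → ℝ)
    (hE : ∀ i j, (∑ m, E i m * E j m) = if i = j then (1:ℝ) else 0)
    (p q : Fin k → ℝ) :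
    (∑ m, (∑ i, p i * E i m) * (∑ j, q j * E j m)) = ∑ i, p i * q i := by
  have h1 : ∀ m, (∑ i, p i * E i m) * (∑ j, q j * E j m)
      = ∑ i, ∑ j, p i * q j * (E i m * E j m) := by
    intro m
    rw [Finset.sum_mul_sum]
    exact Finset.sum_congr rfl fun i _ => Finset.sum_congr rfl fun j _ => by ring
  calc (∑ m, (∑ i, p i * E i m) * (∑ j, q j * E j m))
      = ∑ m, ∑ i, ∑ j, p i * q j * (E i m * E j m) :=
        Finset.sum_congr rfl fun m _ => h1 m
    _ = ∑ i, ∑ m, ∑ j, p i * q j * (E i m * E j m) := Finset.sum_comm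
    _ = ∑ i, ∑ j, ∑ m, p i * q j * (E i m * E j m) :=
        Finset.sum_congr rfl fun i _ => Finset.sum_comm
    _ = ∑ i, ∑ j, p i * q j * ∑ m, E i m * E j m := by
        refine Finset.sum_congr rfl fun i _ => Finset.sum_congr rfl fun j _ => ?_
        rw [Finset.mul_sum]
    _ = ∑ i, p i * q i := by
        simp_rw [hE]
        simp

lemma rowX {N dd r : ℕ} (X : Matrix (Fin N) (Fin dd) ℝ)
    (σ : Fin r → ℝ) (e : Fin r → Fin N → ℝ) (w : Fin r → Fin dd → ℝ)
    (hX : ∀ n m, X n m = ∑ i, σ i * e i n * w i m) (u : Fin dd → ℝ) (n : Fin N) :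
    ∑ m, X n m * u m = ∑ i, (σ i * (∑ m, w i m * u m)) * e i n := by
  simp_rw [hX, Finset.sum_mul]
  rw [Finset.sum_comm]
  refine Finset.sum_congr rfl fun i _ => ?_
  rw [Finset.mul_sum, Finset.sum_mul]
  refine Finset.sum_congr rfl fun m _ => by ring

lemma amgm_aux (x y p : ℝ) (hx : 0 ≤ x) (hy : 0 ≤ y) (hp : p^2 ≤ x*y) : 2*p ≤ x + y := by
  rcases le_or_gt (x + y + 2*p) 0 with h | h
  · nlinarith
  · nlinarith [sq_nonneg (x - y)]

/-- Sharpness `S(θ) = λ_max(∇²L(θ))`: the largest eigenvalue of the Hessian of `L` at `θ`,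
expressed as the supremum of the Hessian quadratic form over the unit sphere. -/
noncomputable def sharpness {E : Type*} [NormedAddCommGroup E] [NormedSpace ℝ E]
    (L : E → ℝ) (θ : E) : ℝ :=
  sSup {c : ℝ | ∃ ξ : E, ‖ξ‖ = 1 ∧ fderiv ℝ (fderiv ℝ L) θ ξ ξ = c}

/-- **Sharpness bounds for the two-layer minimalist model at an arbitrary parameter.** -/
theorem two_layer_sharpness_bounds_arbitrary_theta
    (N dd r : ℕ) (hN : 0 < N) (hr : 0 < r)
    (X : Matrix (Fin N) (Fin dd) ℝ)
    (σ : Fin r → ℝ) (e : Fin r → Fin N → ℝ) (w : Fin r → Fin dd → ℝ)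
    (dc : Fin r → ℝ) (y : Fin N → ℝ)
    (hσpos : ∀ i, 0 < σ i)
    (hσdec : ∀ i j : Fin r, i ≤ j → σ j ≤ σ i)
    (he : ∀ i j : Fin r, ∑ n, e i n * e j n = if i = j then (1 : ℝ) else 0)
    (hw : ∀ i j : Fin r, ∑ m, w i m * w j m = if i = j then (1 : ℝ) else 0)
    (hX : ∀ n m, X n m = ∑ i, σ i * e i n * w i m)
    (hrank : X.rank = r)
    (hy : ∀ n, y n = ∑ i, dc i * e i n)
    (L : EuclideanSpace ℝ (Fin dd ⊕ Unit) → ℝ)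
    (hL : ∀ θ, L θ = (1 / (2 * (N : ℝ))) *
      ∑ n, ((∑ m, X n m * θ (Sum.inl m)) * θ (Sum.inr ()) - y n) ^ 2)
    (θ : EuclideanSpace ℝ (Fin dd ⊕ Unit))
    (o : Fin r → ℝ) (ho : ∀ i, o i = ∑ m, w i m * θ (Sum.inl m))
    (hpos : 0 < σ ⟨0, hr⟩ ^ 2 * θ (Sum.inr ()) ^ 2 + σ ⟨0, hr⟩ ^ 2 * o ⟨0, hr⟩ ^ 2) :
    (1 / (N : ℝ)) * (σ ⟨0, hr⟩ ^ 2 * θ (Sum.inr ()) ^ 2 + σ ⟨0, hr⟩ ^ 2 * o ⟨0, hr⟩ ^ 2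
        + 2 * σ ⟨0, hr⟩ ^ 4 * o ⟨0, hr⟩ ^ 2 * θ (Sum.inr ()) ^ 2
            / (σ ⟨0, hr⟩ ^ 2 * θ (Sum.inr ()) ^ 2 + σ ⟨0, hr⟩ ^ 2 * o ⟨0, hr⟩ ^ 2)
        - 2 * σ ⟨0, hr⟩ ^ 3 * dc ⟨0, hr⟩ * o ⟨0, hr⟩ * θ (Sum.inr ())
            / (σ ⟨0, hr⟩ ^ 2 * θ (Sum.inr ()) ^ 2 + σ ⟨0, hr⟩ ^ 2 * o ⟨0, hr⟩ ^ 2))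
      ≤ sharpness L θ ∧
    sharpness L θ ≤ (1 / (N : ℝ)) *
      (σ ⟨0, hr⟩ ^ 2 * θ (Sum.inr ()) ^ 2 + (∑ i, σ i ^ 2 * o i ^ 2)
        + Real.sqrt (∑ i, (σ i * (σ i * o i * θ (Sum.inr ()) - dc i)) ^ 2)) := by
  classical
  have hNne : ((N:ℝ)) ≠ 0 := Nat.cast_ne_zero.mpr hN.ne'
  have hNpos : (0:ℝ) < N := Nat.cast_pos.mpr hN
  set i0 : Fin r := ⟨0, hr⟩ with hi0
  set v : ℝ := θ (Sum.inr ()) with hv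
  -- continuous linear maps
  set A : Fin N → (EuclideanSpace ℝ (Fin dd ⊕ Unit) →L[ℝ] ℝ) :=
    fun n => ∑ m, X n m • (EuclideanSpace.proj (𝕜 := ℝ) (Sum.inl m : Fin dd ⊕ Unit)) with hA
  set V : EuclideanSpace ℝ (Fin dd ⊕ Unit) →L[ℝ] ℝ :=
    EuclideanSpace.proj (𝕜 := ℝ) (Sum.inr () : Fin dd ⊕ Unit) with hV
  have hAap : ∀ n (φ : EuclideanSpace ℝ (Fin dd ⊕ Unit)),
      A n φ = ∑ m, X n m * φ (Sum.inl m) := by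
    intro n φ
    simp [hA, ContinuousLinearMap.sum_apply, ContinuousLinearMap.smul_apply,
      PiLp.proj_apply, smul_eq_mul]
  have hVap : ∀ φ : EuclideanSpace ℝ (Fin dd ⊕ Unit), V φ = φ (Sum.inr ()) := by
    intro φ; simp [hV, PiLp.proj_apply]
  have hLeq : L = fun φ => (1/(2*(N:ℝ))) * ∑ n, (A n φ * V φ - y n)^2 := by
    funext φ
    rw [hL]
    congr 1
    exact Finset.sum_congr rfl fun n _ => by rw [hAap, hVap]
  -- the quadratic form
  have hQ : ∀ ξ : EuclideanSpace ℝ (Fin dd ⊕ Unit), fderiv ℝ (fderiv ℝ L) θ ξ ξ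
      = (1/(N:ℝ)) * ((∑ i, (σ i * o i * ξ (Sum.inr ()) + σ i * v * (∑ m, w i m * ξ (Sum.inl m)))^2)
          + 2 * ξ (Sum.inr ()) * ∑ i, (σ i * (σ i * o i * v - dc i)) * (∑ m, w i m * ξ (Sum.inl m))) := by
    intro ξ
    rw [hLeq, hessianQuad]
    set s : ℝ := ξ (Sum.inr ()) with hs
    set t : Fin r → ℝ := fun i => ∑ m, w i m * ξ (Sum.inl m) with htdef
    have ha : ∀ n, A n θ = ∑ i, (σ i * o i) * e i n := by
      intro n
      rw [hAap, rowX X σ e w hX]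
      exact Finset.sum_congr rfl fun i _ => by rw [← ho]
    have hb : ∀ n, A n ξ = ∑ i, (σ i * t i) * e i n := by
      intro n
      rw [hAap, rowX X σ e w hX]
    have hVθ : V θ = v := hVap θ
    have hVξ : V ξ = s := hVap ξ
    have hsum1 : ∑ n, (A n θ * V ξ + V θ * A n ξ)^2
        = ∑ i, (σ i * o i * s + σ i * v * t i)^2 := by
      calc ∑ n, (A n θ * V ξ + V θ * A n ξ)^2
          = ∑ n, (∑ i, (σ i * o i * s + σ i * v * t i) * e i n)
              * (∑ j, (σ j * o j * s + σ j * v * t j) * e j n) := by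
            refine Finset.sum_congr rfl fun n _ => ?_
            have : A n θ * V ξ + V θ * A n ξ
                = ∑ i, (σ i * o i * s + σ i * v * t i) * e i n := by
              rw [ha, hb, hVθ, hVξ, Finset.sum_mul, Finset.mul_sum, ← Finset.sum_add_distrib]
              exact Finset.sum_congr rfl fun i _ => by ring
            rw [this, sq]
        _ = ∑ i, (σ i * o i * s + σ i * v * t i) * (σ i * o i * s + σ i * v * t i) :=
            ortho_expand e he _ _
        _ = ∑ i, (σ i * o i * s + σ i * v * t i)^2 := by
            exact Finset.sum_congr rfl fun i _ => (sq _).symm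
    have hsum2 : ∑ n, (A n θ * V θ - y n) * (A n ξ)
        = ∑ i, (σ i * o i * v - dc i) * (σ i * t i) := by
      calc ∑ n, (A n θ * V θ - y n) * (A n ξ)
          = ∑ n, (∑ i, (σ i * o i * v - dc i) * e i n) * (∑ j, (σ j * t j) * e j n) := by
            refine Finset.sum_congr rfl fun n _ => ?_
            have hfn : A n θ * V θ - y n = ∑ i, (σ i * o i * v - dc i) * e i n := by
              rw [ha, hVθ, hy, Finset.sum_mul, ← Finset.sum_sub_distrib]
              exact Finset.sum_congr rfl fun i _ => by ring
            rw [hfn, hb]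
        _ = ∑ i, (σ i * o i * v - dc i) * (σ i * t i) := ortho_expand e he _ _
    have hstep : ∑ n, (2 * (A n θ * V ξ + V θ * A n ξ)^2
          + 4 * (A n θ * V θ - y n) * (A n ξ * V ξ))
        = 2 * (∑ i, (σ i * o i * s + σ i * v * t i)^2)
          + 4 * s * (∑ i, (σ i * o i * v - dc i) * (σ i * t i)) := by
      rw [Finset.sum_add_distrib, ← Finset.mul_sum, hsum1]
      congr 1
      calc ∑ n, 4 * (A n θ * V θ - y n) * (A n ξ * V ξ)
          = ∑ n, 4 * s * ((A n θ * V θ - y n) * (A n ξ)) := by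
            refine Finset.sum_congr rfl fun n _ => ?_
            rw [hVξ]; ring
        _ = 4 * s * ∑ n, (A n θ * V θ - y n) * (A n ξ) := by rw [Finset.mul_sum]
        _ = 4 * s * (∑ i, (σ i * o i * v - dc i) * (σ i * t i)) := by rw [hsum2]
    rw [hstep]
    have hc : ∀ i, (σ i * o i * v - dc i) * (σ i * t i)
        = (σ i * (σ i * o i * v - dc i)) * t i := fun i => by ring
    simp_rw [hc]
    field_simp
    simp only [htdef]
    ring_nf
    congr 2
    exact Finset.sum_congr rfl fun x _ => by ring
  -- norm identity
  have hnorm1 : ∀ ξ : EuclideanSpace ℝ (Fin dd ⊕ Unit), ‖ξ‖ = 1 →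
      (∑ m, ξ (Sum.inl m)^2) + ξ (Sum.inr ())^2 = 1 := by
    intro ξ hξ
    have h := EuclideanSpace.norm_eq ξ
    rw [hξ] at h
    have hS : (0:ℝ) ≤ ∑ k, ‖ξ k‖^2 := Finset.sum_nonneg fun k _ => sq_nonneg _
    have h2 : (∑ k, ‖ξ k‖^2) = 1 := by
      have := Real.sq_sqrt hS
      rw [← h] at this
      linarith
    rw [Fintype.sum_sum_type] at h2
    simpa [Real.norm_eq_abs, sq_abs] using h2
  -- Bessel inequality
  have hbessel : ∀ ξ : EuclideanSpace ℝ (Fin dd ⊕ Unit),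
      (∑ i, (∑ m, w i m * ξ (Sum.inl m))^2) ≤ ∑ m, ξ (Sum.inl m)^2 := by
    intro ξ
    set t : Fin r → ℝ := fun i => ∑ m, w i m * ξ (Sum.inl m) with htdef
    have h1 : ∑ m, (∑ i, t i * w i m) * (∑ j, t j * w j m) = ∑ i, t i * t i :=
      ortho_expand w hw t t
    have h2 : ∑ m, (∑ i, t i * w i m) * ξ (Sum.inl m) = ∑ i, t i * t i := by
      calc ∑ m, (∑ i, t i * w i m) * ξ (Sum.inl m)
          = ∑ m, ∑ i, t i * (w i m * ξ (Sum.inl m)) := by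
            refine Finset.sum_congr rfl fun m _ => ?_
            rw [Finset.sum_mul]
            exact Finset.sum_congr rfl fun i _ => by ring
        _ = ∑ i, ∑ m, t i * (w i m * ξ (Sum.inl m)) := Finset.sum_comm
        _ = ∑ i, t i * t i := by
            refine Finset.sum_congr rfl fun i _ => ?_
            rw [← Finset.mul_sum, htdef]
    have h0 : (0:ℝ) ≤ ∑ m, (ξ (Sum.inl m) - ∑ i, t i * w i m)^2 :=
      Finset.sum_nonneg fun m _ => sq_nonneg _
    have hexp : (∑ m, (ξ (Sum.inl m) - ∑ i, t i * w i m)^2)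
        = (∑ m, ξ (Sum.inl m)^2) - 2 * (∑ i, t i * t i) + (∑ i, t i * t i) := by
      have hpt : ∀ m, (ξ (Sum.inl m) - ∑ i, t i * w i m)^2
          = ξ (Sum.inl m)^2 - 2*((∑ i, t i * w i m) * ξ (Sum.inl m))
            + (∑ i, t i * w i m)*(∑ j, t j * w j m) := fun m => by ring
      simp_rw [hpt]
      rw [Finset.sum_add_distrib, Finset.sum_sub_distrib, ← Finset.mul_sum, h2, h1]
    have hts : ∀ i, t i * t i = t i ^ 2 := fun i => (sq (t i)).symm
    have : (∑ i, t i * t i) = ∑ i, t i ^2 := Finset.sum_congr rfl fun i _ => hts i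
    rw [hexp, this] at h0
    linarith
  -- notation for the bound values
  set G2 : ℝ := ∑ i, (σ i * (σ i * o i * v - dc i))^2 with hG2
  set G : ℝ := Real.sqrt G2 with hGdef
  have hG2nn : 0 ≤ G2 := Finset.sum_nonneg fun i _ => sq_nonneg _
  have hGnn : 0 ≤ G := Real.sqrt_nonneg _
  have hGsq : G^2 = G2 := Real.sq_sqrt hG2nn
  set UB : ℝ := (1 / (N : ℝ)) * (σ i0 ^ 2 * v ^ 2 + (∑ i, σ i ^ 2 * o i ^ 2) + G) with hUB
  -- upper bound for every unit vector
  have hub : ∀ ξ : EuclideanSpace ℝ (Fin dd ⊕ Unit), ‖ξ‖ = 1 →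
      fderiv ℝ (fderiv ℝ L) θ ξ ξ ≤ UB := by
    intro ξ hξ
    rw [hQ ξ]
    set s : ℝ := ξ (Sum.inr ()) with hs
    set t : Fin r → ℝ := fun i => ∑ m, w i m * ξ (Sum.inl m) with htdef
    set T : ℝ := ∑ i, t i ^2 with hT
    set B : ℝ := ∑ i, (σ i * o i)^2 with hB
    set D : ℝ := ∑ i, (σ i * t i)^2 with hD
    set C : ℝ := ∑ i, (σ i * o i) * (σ i * t i) with hC
    set P : ℝ := ∑ i, (σ i * (σ i * o i * v - dc i)) * t i with hP
    have hTnn : 0 ≤ T := Finset.sum_nonneg fun i _ => sq_nonneg _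
    have hBnn : 0 ≤ B := Finset.sum_nonneg fun i _ => sq_nonneg _
    have hDnn : 0 ≤ D := Finset.sum_nonneg fun i _ => sq_nonneg _
    have hTs : T + s^2 ≤ 1 := by
      have h1 : T ≤ ∑ m, ξ (Sum.inl m)^2 := by
        rw [hT]; simpa only [htdef] using hbessel ξ
      have h2 := hnorm1 ξ hξ
      rw [← hs] at h2
      calc T + s^2 ≤ (∑ m, ξ (Sum.inl m)^2) + s^2 := by exact add_le_add_left h1 _
        _ = 1 := h2
    have hs2 : s^2 ≤ 1 := by nlinarith
    have hCsq : C^2 ≤ B * D := Finset.sum_mul_sq_le_sq_mul_sq Finset.univ _ _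
    have hPsq : P^2 ≤ G2 * T := Finset.sum_mul_sq_le_sq_mul_sq Finset.univ _ _
    have hDT : D ≤ σ i0^2 * T := by
      rw [hD, hT, Finset.mul_sum]
      refine Finset.sum_le_sum fun i _ => ?_
      have hσle : σ i ≤ σ i0 := hσdec i0 i (by simp [hi0, Fin.le_def])
      have h1 : (σ i * t i)^2 = σ i ^2 * t i ^2 := by ring
      have h2 : σ i ^2 ≤ σ i0 ^2 := by
        have := (hσpos i).le
        nlinarith
      rw [h1]
      exact mul_le_mul_of_nonneg_right h2 (sq_nonneg _)
    have hexp : (∑ i, (σ i * o i * s + σ i * v * t i)^2)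
        = s^2 * B + v^2 * D + 2*(s*v) * C := by
      rw [hB, hD, hC, Finset.mul_sum, Finset.mul_sum, Finset.mul_sum,
        ← Finset.sum_add_distrib, ← Finset.sum_add_distrib]
      exact Finset.sum_congr rfl fun i _ => by ring
    -- quadratic part bound
    have hT1 : T ≤ 1 - s^2 := by linarith
    have hD1 : D ≤ σ i0^2 * (1 - s^2) :=
      le_trans hDT (mul_le_mul_of_nonneg_left hT1 (sq_nonneg _))
    have hq1 : s^2 * B + v^2 * D + 2*(s*v) * C ≤ σ i0^2 * v^2 + B := by
      have hx : 0 ≤ B * (1 - s^2) := mul_nonneg hBnn (by linarith)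
      have hy' : 0 ≤ σ i0^2 * v^2 * s^2 := by positivity
      have h1 : C^2 ≤ B * (σ i0^2 * (1 - s^2)) :=
        le_trans hCsq (mul_le_mul_of_nonneg_left hD1 hBnn)
      have hp' := mul_le_mul_of_nonneg_left h1 (mul_nonneg (sq_nonneg s) (sq_nonneg v))
      have hp : (s*v*C)^2 ≤ (B * (1 - s^2)) * (σ i0^2 * v^2 * s^2) := by
        calc (s*v*C)^2 = s^2 * v^2 * C^2 := by ring
          _ ≤ s^2 * v^2 * (B * (σ i0^2 * (1 - s^2))) := hp'
          _ = (B * (1 - s^2)) * (σ i0^2 * v^2 * s^2) := by ring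
      have h2 := amgm_aux _ _ _ hx hy' hp
      have hvD : v^2 * D ≤ v^2 * (σ i0^2 * (1 - s^2)) :=
        mul_le_mul_of_nonneg_left hD1 (sq_nonneg v)
      linarith
    -- cross part bound
    have hq2 : 2 * s * P ≤ G := by
      have hx : 0 ≤ G * T := mul_nonneg hGnn hTnn
      have hy' : 0 ≤ G * s^2 := mul_nonneg hGnn (sq_nonneg _)
      have hp' := mul_le_mul_of_nonneg_left hPsq (sq_nonneg s)
      have hp : (s*P)^2 ≤ (G * T) * (G * s^2) := by
        calc (s*P)^2 = s^2 * P^2 := by ring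
          _ ≤ s^2 * (G2 * T) := hp'
          _ = (G^2) * T * s^2 := by rw [hGsq]; ring
          _ = (G * T) * (G * s^2) := by ring
      have h2 := amgm_aux _ _ _ hx hy' hp
      have : G * T + G * s^2 ≤ G := by
        have := mul_le_mul_of_nonneg_left hTs hGnn
        linarith [this]
      calc 2 * s * P = 2 * (s * P) := by ring
        _ ≤ G * T + G * s^2 := h2
        _ ≤ G := this
    have hBeq : (∑ i, σ i ^ 2 * o i ^ 2) = B := Finset.sum_congr rfl fun i _ => by ring
    rw [hUB, hBeq]
    have hmain : (∑ i, (σ i * o i * s + σ i * v * t i)^2) + 2 * s * P ≤ σ i0^2 * v^2 + B + G := by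
      rw [hexp]
      linarith
    have h1N : (0:ℝ) ≤ 1 / (N:ℝ) := by positivity
    exact mul_le_mul_of_nonneg_left hmain h1N
  -- lower bound witness
  have hvo : 0 < v^2 + o i0 ^2 := by
    by_contra hcon
    push_neg at hcon
    nlinarith [hpos, sq_nonneg (σ i0)]
  set c0 : ℝ := Real.sqrt (v^2 + o i0^2) with hc0def
  have hc0pos : 0 < c0 := Real.sqrt_pos.mpr hvo
  have hc0sq : c0^2 = v^2 + o i0^2 := Real.sq_sqrt hvo.le
  set ξ0 : EuclideanSpace ℝ (Fin dd ⊕ Unit) :=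
    WithLp.toLp 2 (fun k => Sum.elim (fun m => (v / c0) * w i0 m) (fun _ => o i0 / c0) k) with hξ0def
  have hξ0inl : ∀ m, ξ0 (Sum.inl m) = (v / c0) * w i0 m := fun m => rfl
  have hξ0inr : ξ0 (Sum.inr ()) = o i0 / c0 := rfl
  have hwnorm : ∑ m, w i0 m * w i0 m = 1 := by
    have := hw i0 i0
    simpa using this
  have hξ0norm : ‖ξ0‖ = 1 := by
    rw [EuclideanSpace.norm_eq]
    have : (∑ k, ‖ξ0 k‖^2) = 1 := by
      rw [Fintype.sum_sum_type]
      have h1 : ∀ m, ‖ξ0 (Sum.inl m)‖^2 = (v/c0)^2 * (w i0 m * w i0 m) := by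
        intro m
        rw [hξ0inl]
        rw [Real.norm_eq_abs, sq_abs]
        ring
      have h2 : (∑ m, ‖ξ0 (Sum.inl m)‖^2) = (v/c0)^2 := by
        simp_rw [h1]
        rw [← Finset.mul_sum, hwnorm, mul_one]
      have h3 : (∑ u : Unit, ‖ξ0 (Sum.inr u)‖^2) = (o i0/c0)^2 := by
        have hpt : ξ0 (Sum.inr PUnit.unit) = o i0 / c0 := rfl
        simp [Real.norm_eq_abs, sq_abs, hpt]
        rw [div_pow, div_pow, sq_abs, sq_abs]
      rw [h2, h3]
      have hc0ne : c0 ≠ 0 := hc0pos.ne'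
      field_simp
      linarith [hc0sq]
    rw [this, Real.sqrt_one]
  have ht0 : ∀ i, (∑ m, w i m * ξ0 (Sum.inl m)) = (v / c0) * (if i = i0 then (1:ℝ) else 0) := by
    intro i
    simp_rw [hξ0inl]
    calc (∑ m, w i m * ((v / c0) * w i0 m)) = (v/c0) * ∑ m, w i m * w i0 m := by
          rw [Finset.mul_sum]
          exact Finset.sum_congr rfl fun m _ => by ring
      _ = (v / c0) * (if i = i0 then (1:ℝ) else 0) := by rw [hw i i0]
  -- the value at ξ0
  have hval : fderiv ℝ (fderiv ℝ L) θ ξ0 ξ0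
      ≥ (1/(N:ℝ)) * (σ i0^2 * (v^2 + o i0^2)
          + 2 * o i0 * v * (σ i0 * (σ i0 * o i0 * v - dc i0)) / (v^2 + o i0^2)) := by
    rw [hQ ξ0]
    simp_rw [ht0, hξ0inr]
    have hsum2 : (∑ i, (σ i * (σ i * o i * v - dc i)) * ((v / c0) * (if i = i0 then (1:ℝ) else 0)))
        = (σ i0 * (σ i0 * o i0 * v - dc i0)) * (v / c0) := by
      rw [Finset.sum_eq_single i0]
      · simp
      · intro i _ hne
        simp [hne]
      · intro h
        exact absurd (Finset.mem_univ i0) h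
    rw [hsum2]
    have hsum1 : (∑ i, (σ i * o i * (o i0 / c0) + σ i * v * ((v / c0) * (if i = i0 then (1:ℝ) else 0)))^2)
        ≥ (σ i0 * o i0 * (o i0 / c0) + σ i0 * v * ((v / c0) * 1))^2 := by
      have := Finset.single_le_sum (f := fun i =>
        (σ i * o i * (o i0 / c0) + σ i * v * ((v / c0) * (if i = i0 then (1:ℝ) else 0)))^2)
        (fun i _ => sq_nonneg _) (Finset.mem_univ i0)
      simpa using this
    have hc0ne : c0 ≠ 0 := hc0pos.ne'
    have hkey : (σ i0 * o i0 * (o i0 / c0) + σ i0 * v * ((v / c0) * 1))^2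
        = σ i0^2 * (v^2 + o i0^2) := by
      have : (σ i0 * o i0 * (o i0 / c0) + σ i0 * v * ((v / c0) * 1))
          = σ i0 * (v^2 + o i0^2) / c0 := by field_simp; ring
      rw [this]
      rw [div_pow]
      rw [hc0sq]
      field_simp
    have hcross : 2 * (o i0 / c0) * ((σ i0 * (σ i0 * o i0 * v - dc i0)) * (v / c0))
        = 2 * o i0 * v * (σ i0 * (σ i0 * o i0 * v - dc i0)) / (v^2 + o i0^2) := by
      rw [← hc0sq]
      field_simp
    have h1N : (0:ℝ) ≤ 1 / (N:ℝ) := by positivity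
    have : (∑ i, (σ i * o i * (o i0 / c0) + σ i * v * ((v / c0) * (if i = i0 then (1:ℝ) else 0)))^2)
          + 2 * (o i0 / c0) * ((σ i0 * (σ i0 * o i0 * v - dc i0)) * (v / c0))
        ≥ σ i0^2 * (v^2 + o i0^2)
          + 2 * o i0 * v * (σ i0 * (σ i0 * o i0 * v - dc i0)) / (v^2 + o i0^2) := by
      rw [hcross]
      have := hsum1
      rw [hkey] at this
      linarith
    exact mul_le_mul_of_nonneg_left this h1N
  -- assemble
  have hmemset : fderiv ℝ (fderiv ℝ L) θ ξ0 ξ0 ∈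
      {c : ℝ | ∃ ξ : EuclideanSpace ℝ (Fin dd ⊕ Unit), ‖ξ‖ = 1 ∧ fderiv ℝ (fderiv ℝ L) θ ξ ξ = c} :=
    ⟨ξ0, hξ0norm, rfl⟩
  have hbdd : BddAbove {c : ℝ | ∃ ξ : EuclideanSpace ℝ (Fin dd ⊕ Unit),
      ‖ξ‖ = 1 ∧ fderiv ℝ (fderiv ℝ L) θ ξ ξ = c} := by
    refine ⟨UB, ?_⟩
    rintro c ⟨ξ, hξ, rfl⟩
    exact hub ξ hξ
  constructor
  · -- lower bound
    have hle1 : fderiv ℝ (fderiv ℝ L) θ ξ0 ξ0 ≤ sharpness L θ := le_csSup hbdd hmemset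
    refine le_trans ?_ (le_trans hval hle1)
    -- LB expression ≤ value expression (they are equal)
    have hden : σ i0 ^ 2 * v ^ 2 + σ i0 ^ 2 * o i0 ^ 2 = σ i0^2 * (v^2 + o i0^2) := by ring
    have hdne : (v^2 + o i0^2) ≠ 0 := hvo.ne'
    have hσne : σ i0 ≠ 0 := (hσpos i0).ne'
    have heq : (σ i0 ^ 2 * v ^ 2 + σ i0 ^ 2 * o i0 ^ 2
        + 2 * σ i0 ^ 4 * o i0 ^ 2 * v ^ 2 / (σ i0 ^ 2 * v ^ 2 + σ i0 ^ 2 * o i0 ^ 2)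
        - 2 * σ i0 ^ 3 * dc i0 * o i0 * v / (σ i0 ^ 2 * v ^ 2 + σ i0 ^ 2 * o i0 ^ 2))
        = σ i0^2 * (v^2 + o i0^2)
          + 2 * o i0 * v * (σ i0 * (σ i0 * o i0 * v - dc i0)) / (v^2 + o i0^2) := by
      rw [hden]
      field_simp
      ring
    rw [heq]
  · -- upper bound
    exact csSup_le ⟨_, hmemset⟩ (by rintro c ⟨ξ, hξ, rfl⟩; exact hub ξ hξ)
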